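/- Let A ≠ 0 and X be real matrices with the same number of rows such that the column space of X is contained in the column space of A. Let [X, A] = U Σ V^T be a skinny SVD of the horizontal concatenation, and partition V^T = [V_X^T, V_A^T] so that X = U Σ V_X^T and A = U Σ V_A^T. Then Z* = V_A (V_A^T V_A)^{-1} V_X^T is the unique minimizer of ‖Z‖_* subject to X = A Z. -/

import Mathlib

open Matrix

theorem Matrix.isHermitian_transpose_mul_self {m n : Type*} [Fintype m] (A : Matrix m n ℝ) :
    (Aᵀ * A).IsHermitian := by
  simpa [conjTranspose_eq_transpose_of_trivial] using isHermitian_conjTranspose_mul_self A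

/-- The nuclear norm of a real matrix: the sum of its singular values,
i.e. the sum of the square roots of the eigenvalues of `Mᵀ * M`. -/
noncomputable def nuclearNorm {m n : Type*} [Fintype m] [Fintype n] [DecidableEq n]
    (M : Matrix m n ℝ) : ℝ :=
  ∑ i, Real.sqrt ((Matrix.isHermitian_transpose_mul_self M).eigenvalues i)

section Aux

variable {n : Type*} [Fintype n] [DecidableEq n]

lemma psd_tmul {a b : Type*} [Fintype a] [Fintype b] [DecidableEq b] (M : Matrix a b ℝ) :
    (Mᵀ * M).PosSemidef := by
  simpa [conjTranspose_eq_transpose_of_trivial] using posSemidef_conjTranspose_mul_self M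

lemma tmul_self_eq_zero {a b : Type*} [Fintype a] [Fintype b] {M : Matrix a b ℝ}
    (h : Mᵀ * M = 0) : M = 0 := by
  rw [← conjTranspose_eq_transpose_of_trivial] at h
  exact conjTranspose_mul_self_eq_zero.mp h

noncomputable def Matrix.PosSemidef.sqrt {A : Matrix n n ℝ} (hA : A.PosSemidef) :
    Matrix n n ℝ :=
  (hA.1.eigenvectorUnitary : Matrix n n ℝ) * diagonal ((↑) ∘ (√·) ∘ hA.1.eigenvalues) *
    star (hA.1.eigenvectorUnitary : Matrix n n ℝ)

lemma Matrix.PosSemidef.posSemidef_sqrt {A : Matrix n n ℝ} (hA : A.PosSemidef) :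
    hA.sqrt.PosSemidef := by
  unfold Matrix.PosSemidef.sqrt
  rw [star_eq_conjTranspose]
  exact (PosSemidef.diagonal (fun i => Real.sqrt_nonneg _)).mul_mul_conjTranspose_same _

lemma Matrix.PosSemidef.sqrt_mul_self {A : Matrix n n ℝ} (hA : A.PosSemidef) :
    hA.sqrt * hA.sqrt = A := by
  have hspec := hA.1.spectral_theorem
  rw [Unitary.conjStarAlgAut_apply] at hspec
  have hVsV : star (hA.1.eigenvectorUnitary : Matrix n n ℝ) * (hA.1.eigenvectorUnitary : Matrix n n ℝ) = 1 :=
    Unitary.star_mul_self_of_mem hA.1.eigenvectorUnitary.2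
  unfold Matrix.PosSemidef.sqrt
  conv_rhs => rw [hspec]
  simp only [Matrix.mul_assoc]
  rw [← Matrix.mul_assoc _ (hA.1.eigenvectorUnitary : Matrix n n ℝ), hVsV, Matrix.one_mul,
    ← Matrix.mul_assoc (diagonal _), diagonal_mul_diagonal]
  congr 3
  funext i
  simp [Real.mul_self_sqrt (hA.eigenvalues_nonneg i)]

lemma nuclearNorm_eq_trace_sqrt {m : Type*} [Fintype m] (M : Matrix m n ℝ)
    (h : (Mᵀ * M).PosSemidef) :
    nuclearNorm M = trace h.sqrt := by
  unfold nuclearNorm Matrix.PosSemidef.sqrt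
  rw [trace_mul_cycle, Unitary.star_mul_self_of_mem
    (Matrix.IsHermitian.eigenvectorUnitary h.1).2, one_mul, trace_diagonal]
  simp

lemma trace_sqrt_congr {A B : Matrix n n ℝ} (hA : A.PosSemidef) (hB : B.PosSemidef)
    (h : A = B) : trace hA.sqrt = trace hB.sqrt := by subst h; rfl

lemma psd_diag_nonneg {B : Matrix n n ℝ} (hB : B.PosSemidef) (i : n) : 0 ≤ B i i := by
  have := hB.re_dotProduct_nonneg (Pi.single i 1)
  simpa [dotProduct, Pi.single_apply] using this

lemma psd_zero_diag {B : Matrix n n ℝ} (hB : B.PosSemidef) (h : ∀ i, B i i = 0) : B = 0 := by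
  have hspec := hB.1.spectral_theorem
  rw [Unitary.conjStarAlgAut_apply] at hspec
  have htr : trace B = ∑ i, hB.1.eigenvalues i := by
    conv_lhs => rw [hspec]
    rw [trace_mul_cycle, Unitary.star_mul_self_of_mem
      (Matrix.IsHermitian.eigenvectorUnitary hB.1).2, one_mul, trace_diagonal]
    simp
  have htr0 : trace B = 0 := by simp [trace, diag, h]
  have hz : ∀ i ∈ Finset.univ, hB.1.eigenvalues i = 0 := by
    rw [← Finset.sum_eq_zero_iff_of_nonneg (fun i _ => hB.eigenvalues_nonneg i)]
    rw [← htr, htr0]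
  have : diagonal (RCLike.ofReal ∘ hB.1.eigenvalues : n → ℝ) = 0 := by
    ext i j
    by_cases hij : i = j <;> simp [diagonal, hij, hz]
  rw [hspec, this, mul_zero, zero_mul]

lemma key_ineq {A B : Matrix n n ℝ} (hA : A.PosSemidef) (hB : B.PosSemidef) :
    trace hA.sqrt ≤ trace (hA.add hB).sqrt ∧
    (trace hA.sqrt = trace (hA.add hB).sqrt → B = 0) := by
  have hH := hA.add hB
  set V : Matrix n n ℝ := (hH.1.eigenvectorUnitary : Matrix n n ℝ) with hVdef
  set μ : n → ℝ := hH.1.eigenvalues with hμdef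
  have hVsV : star V * V = 1 := Unitary.star_mul_self_of_mem hH.1.eigenvectorUnitary.2
  have hVVs : V * star V = 1 := Unitary.mul_star_self_of_mem hH.1.eigenvectorUnitary.2
  have hdiag : star V * (A + B) * V = diagonal μ := by
    have := hH.1.spectral_theorem
    rw [Unitary.conjStarAlgAut_apply] at this
    rw [this, ← Matrix.mul_assoc, ← Matrix.mul_assoc, hVsV, Matrix.one_mul, Matrix.mul_assoc, hVsV,
      Matrix.mul_one]
    rfl
  set T := hA.sqrt with hTdef
  have hT : T.PosSemidef := hA.posSemidef_sqrt
  have hTT : T * T = A := hA.sqrt_mul_self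
  set T' := star V * T * V with hT'def
  have hT' : T'.PosSemidef := by
    have := hT.conjTranspose_mul_mul_same V
    simpa [star_eq_conjTranspose, hT'def] using this
  have hT'sq : T' * T' = star V * A * V := by
    calc (star V * T * V) * (star V * T * V)
        = star V * (T * ((V * star V) * (T * V))) := by simp only [Matrix.mul_assoc]
      _ = star V * (T * (T * V)) := by rw [hVVs, one_mul]
      _ = star V * A * V := by rw [← hTT]; simp only [Matrix.mul_assoc]
  set B' := star V * B * V with hB'def
  have hB' : B'.PosSemidef := by
    have := hB.conjTranspose_mul_mul_same V
    simpa [star_eq_conjTranspose, hB'def] using this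
  have hsplit : diagonal μ = T' * T' + B' := by
    rw [hT'sq, ← hdiag, hB'def]
    noncomm_ring
  have hμnonneg : ∀ i, 0 ≤ μ i := fun i => hH.eigenvalues_nonneg i
  have hdiagB : ∀ i, (T' * T') i i ≤ μ i := by
    intro i
    have h0 := psd_diag_nonneg hB' i
    have : diagonal μ i i = (T' * T') i i + B' i i := by rw [hsplit]; rfl
    simp only [diagonal_apply_eq] at this
    linarith
  have hTsq_diag : ∀ i, (T' i i)^2 ≤ (T' * T') i i := by
    intro i
    have : (T' * T') i i = ∑ k, (T' i k)^2 := by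
      simp [Matrix.mul_apply, pow_two]
      congr 1; ext k
      rw [show T' k i = T' i k from by
        have := congrFun (congrFun hT'.1 i) k
        simpa [conjTranspose_apply] using this]
    rw [this]
    exact Finset.single_le_sum (f := fun k => (T' i k)^2) (fun k _ => sq_nonneg _) (Finset.mem_univ i)
  have hterm : ∀ i, T' i i ≤ Real.sqrt (μ i) := by
    intro i
    have h1 : T' i i ≤ Real.sqrt ((T' * T') i i) := by
      have := psd_diag_nonneg hT' i
      nlinarith [Real.sq_sqrt (le_trans (sq_nonneg (T' i i)) (hTsq_diag i)),
        Real.sqrt_nonneg ((T' * T') i i), hTsq_diag i,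
        Real.sqrt_le_sqrt (hTsq_diag i)]
    exact h1.trans (Real.sqrt_le_sqrt (hdiagB i))
  have htrT : trace T = trace T' := by
    rw [hT'def, trace_mul_cycle, hVVs, one_mul]
  have htrH : trace (hA.add hB).sqrt = ∑ i, Real.sqrt (μ i) := by
    unfold Matrix.PosSemidef.sqrt
    rw [trace_mul_cycle, Unitary.star_mul_self_of_mem
      (Matrix.IsHermitian.eigenvectorUnitary (hA.add hB).1).2, one_mul, trace_diagonal]
    simp [hμdef]
  have htr'sum : trace T' = ∑ i, T' i i := by simp [Matrix.trace, Matrix.diag]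
  have hle : trace hA.sqrt ≤ trace (hA.add hB).sqrt := by
    rw [htrH, ← hTdef, htrT, htr'sum]
    exact Finset.sum_le_sum (fun i _ => hterm i)
  refine ⟨hle, fun heq => ?_⟩
  have heq' : ∑ i, T' i i = ∑ i, Real.sqrt (μ i) := by
    rw [← htr'sum, ← htrT, heq, htrH]
  have hall : ∀ i ∈ Finset.univ, T' i i = Real.sqrt (μ i) := by
    intro i _
    by_contra hne
    have hlt : T' i i < Real.sqrt (μ i) := lt_of_le_of_ne (hterm i) hne
    have := Finset.sum_lt_sum (fun j _ => hterm j) ⟨i, Finset.mem_univ i, hlt⟩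
    linarith [heq'.ge, heq'.le]
  have hdiagzero : ∀ i, B' i i = 0 := by
    intro i
    have h1 : T' i i = Real.sqrt (μ i) := hall i (Finset.mem_univ i)
    have h2 : (T' i i)^2 ≤ (T' * T') i i := hTsq_diag i
    have h3 : (T' * T') i i ≤ μ i := hdiagB i
    have h4 : (T' i i)^2 = μ i := by
      rw [h1, Real.sq_sqrt (hμnonneg i)]
    have h5 : (T' * T') i i = μ i := le_antisymm h3 (h4 ▸ h2)
    have : diagonal μ i i = (T' * T') i i + B' i i := by rw [hsplit]; rfl
    simp only [diagonal_apply_eq] at this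
    linarith
  have hB'zero : B' = 0 := psd_zero_diag hB' hdiagzero
  have : B = V * B' * star V := by
    rw [hB'def]
    calc B = (V * star V) * B * (V * star V) := by rw [hVVs]; simp
      _ = V * (star V * B * V) * star V := by simp only [Matrix.mul_assoc]
  rw [this, hB'zero, mul_zero, zero_mul]

end Aux

theorem stmt_6 {p q s : Type*} [Fintype p] [Fintype q] [Fintype s]
    [DecidableEq q] [DecidableEq s] {r : ℕ}
    (X : Matrix p q ℝ) (A : Matrix p s ℝ)
    (hA : A ≠ 0) (hspan : ∃ Z : Matrix s q ℝ, X = A * Z)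
    (U : Matrix p (Fin r) ℝ) (σ : Fin r → ℝ)
    (VX : Matrix q (Fin r) ℝ) (VA : Matrix s (Fin r) ℝ)
    (hσ : ∀ i, 0 < σ i)
    (hU : Uᵀ * U = 1) (hV : VXᵀ * VX + VAᵀ * VA = 1)
    (hX : X = U * Matrix.diagonal σ * VXᵀ) (hA' : A = U * Matrix.diagonal σ * VAᵀ) :
    X = A * (VA * (VAᵀ * VA)⁻¹ * VXᵀ) ∧
    (∀ Z : Matrix s q ℝ, X = A * Z →
      nuclearNorm (VA * (VAᵀ * VA)⁻¹ * VXᵀ) ≤ nuclearNorm Z) ∧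
    (∀ Z : Matrix s q ℝ, X = A * Z →
      nuclearNorm Z = nuclearNorm (VA * (VAᵀ * VA)⁻¹ * VXᵀ) →
      Z = VA * (VAᵀ * VA)⁻¹ * VXᵀ) := by
  -- cancellation of U * diagonal σ on the left
  have hDinv : Matrix.diagonal (fun i => (σ i)⁻¹) * Matrix.diagonal σ = (1 : Matrix (Fin r) (Fin r) ℝ) := by
    rw [diagonal_mul_diagonal]
    rw [show (fun i => (σ i)⁻¹ * σ i) = fun _ => (1 : ℝ) from
      funext fun i => inv_mul_cancel₀ (hσ i).ne']
    exact Matrix.diagonal_one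
  have hcancel : ∀ {t : Type _} [Fintype t] (M N : Matrix (Fin r) t ℝ),
      U * Matrix.diagonal σ * M = U * Matrix.diagonal σ * N → M = N := by
    intro t _ M N h
    have e : ∀ (M : Matrix (Fin r) t ℝ),
        Matrix.diagonal (fun i => (σ i)⁻¹) * (Uᵀ * (U * Matrix.diagonal σ * M)) = M := by
      intro M
      rw [show Uᵀ * (U * Matrix.diagonal σ * M) = (Uᵀ * U) * (Matrix.diagonal σ * M) by
        simp only [Matrix.mul_assoc], hU, Matrix.one_mul, ← Matrix.mul_assoc, hDinv, Matrix.one_mul]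
    rw [← e M, ← e N, h]
  -- feasibility gives VAᵀ * Z = VXᵀ
  have hfeas : ∀ Z : Matrix s q ℝ, X = A * Z → VAᵀ * Z = VXᵀ := by
    intro Z hZ
    refine (hcancel _ _ ?_).symm
    rw [← Matrix.mul_assoc]
    rw [← hA', ← hZ, hX]
  -- invertibility of G = VAᵀ * VA
  set G := VAᵀ * VA with hGdef
  obtain ⟨Z₀, hZ₀⟩ := hspan
  have h0 : VAᵀ * Z₀ = VXᵀ := hfeas Z₀ hZ₀
  have hE : VAᵀ * (Z₀ * (Z₀ᵀ * VA) + VA) = 1 := by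
    rw [Matrix.mul_add, ← hV]
    congr 1
    have hVX : VX = Z₀ᵀ * VA := by
      rw [← transpose_transpose VX, ← h0, transpose_mul, transpose_transpose]
    rw [← h0, hVX]
    simp only [Matrix.mul_assoc]
  have hE' : (Z₀ * (Z₀ᵀ * VA) + VA)ᵀ * VA = 1 := by
    have := congrArg Matrix.transpose hE
    rwa [transpose_mul, transpose_transpose, transpose_one] at this
  have hVAinj : ∀ v : Fin r → ℝ, VA *ᵥ v = 0 → v = 0 := by
    intro v hv
    have : ((Z₀ * (Z₀ᵀ * VA) + VA)ᵀ * VA) *ᵥ v = v := by rw [hE', one_mulVec]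
    rw [← Matrix.mulVec_mulVec, hv, Matrix.mulVec_zero] at this
    exact this.symm
  have hGpd : G.PosDef := by
    refine Matrix.PosDef.of_dotProduct_mulVec_pos (isHermitian_transpose_mul_self VA) (fun x hx => ?_)
    have hkey : (star x) ⬝ᵥ (G *ᵥ x) = (VA *ᵥ x) ⬝ᵥ (VA *ᵥ x) := by
      rw [hGdef, ← Matrix.mulVec_mulVec, Matrix.dotProduct_mulVec, star_trivial,
        Matrix.vecMul_transpose]
    rw [hkey]
    have hne : VA *ᵥ x ≠ 0 := fun h => hx (hVAinj x h)
    have : 0 < (VA *ᵥ x) ⬝ᵥ (VA *ᵥ x) := by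
      obtain ⟨i, hi⟩ := Function.ne_iff.mp hne
      have : (0:ℝ) < ∑ j, (VA *ᵥ x) j * (VA *ᵥ x) j :=
        Finset.sum_pos' (fun j _ => mul_self_nonneg _)
          ⟨i, Finset.mem_univ i, mul_self_pos.mpr hi⟩
      simpa [dotProduct] using this
    simpa using this
  have hdet : IsUnit G.det := isUnit_iff_ne_zero.mpr hGpd.det_pos.ne'
  have hGinv : G * G⁻¹ = 1 := Matrix.mul_nonsing_inv _ hdet
  have hGinv' : G⁻¹ * G = 1 := Matrix.nonsing_inv_mul _ hdet
  have hGT : Gᵀ = G := by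
    rw [hGdef, transpose_mul, transpose_transpose]
  have hGinvT : (G⁻¹)ᵀ = G⁻¹ := by
    rw [Matrix.transpose_nonsing_inv, hGT]
  set Zs : Matrix s q ℝ := VA * G⁻¹ * VXᵀ with hZsdef
  -- Part 1
  have part1 : X = A * Zs := by
    rw [hA', hX, hZsdef]
    calc U * Matrix.diagonal σ * VXᵀ
        = U * Matrix.diagonal σ * ((G * G⁻¹) * VXᵀ) := by rw [hGinv, Matrix.one_mul]
      _ = U * Matrix.diagonal σ * VAᵀ * (VA * G⁻¹ * VXᵀ) := by
          rw [hGdef]; simp only [Matrix.mul_assoc]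
  -- projection
  set P : Matrix s s ℝ := VA * G⁻¹ * VAᵀ with hPdef
  have hPT : Pᵀ = P := by
    rw [hPdef, transpose_mul, transpose_mul, transpose_transpose, hGinvT,
      Matrix.mul_assoc]
  have hPP : P * P = P := by
    rw [hPdef]
    calc VA * G⁻¹ * VAᵀ * (VA * G⁻¹ * VAᵀ)
        = VA * G⁻¹ * (G * (G⁻¹ * VAᵀ)) := by rw [hGdef]; simp only [Matrix.mul_assoc]
      _ = VA * G⁻¹ * VAᵀ := by rw [← Matrix.mul_assoc G, hGinv, Matrix.one_mul]
  have hPZ : ∀ Z : Matrix s q ℝ, X = A * Z → P * Z = Zs := by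
    intro Z hZ
    rw [hPdef, hZsdef, Matrix.mul_assoc, hfeas Z hZ]
  -- decomposition of ZᵀZ
  have hZZdecomp : ∀ Z : Matrix s q ℝ, X = A * Z →
      Zsᵀ * Zs + (Z - Zs)ᵀ * (Z - Zs) = Zᵀ * Z := by
    intro Z hZ
    have hpz := hPZ Z hZ
    have h1 : Zsᵀ * Zs = Zᵀ * (P * Z) := by
      rw [← hpz, transpose_mul, hPT, Matrix.mul_assoc, ← Matrix.mul_assoc P P Z, hPP]
    have h2 : Zsᵀ * Z = Zᵀ * (P * Z) := by
      rw [← hpz, transpose_mul, hPT, Matrix.mul_assoc]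
    have h3 : Zᵀ * Zs = Zᵀ * (P * Z) := by rw [← hpz]
    rw [transpose_sub, Matrix.sub_mul, Matrix.mul_sub, Matrix.mul_sub, h1, h2, h3]
    abel
  -- nuclear norm comparison
  have hcompare : ∀ Z : Matrix s q ℝ, X = A * Z →
      nuclearNorm Zs ≤ nuclearNorm Z ∧
      (nuclearNorm Zs = nuclearNorm Z → Z = Zs) := by
    intro Z hZ
    have hA0 : (Zsᵀ * Zs).PosSemidef := psd_tmul Zs
    have hB0 : ((Z - Zs)ᵀ * (Z - Zs)).PosSemidef := psd_tmul (Z - Zs)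
    have hkey := key_ineq hA0 hB0
    have e1 : nuclearNorm Zs = trace hA0.sqrt := nuclearNorm_eq_trace_sqrt Zs hA0
    have e2 : nuclearNorm Z = trace (hA0.add hB0).sqrt := by
      rw [nuclearNorm_eq_trace_sqrt Z (psd_tmul Z)]
      exact (trace_sqrt_congr _ _ (hZZdecomp Z hZ)).symm
    constructor
    · rw [e1, e2]; exact hkey.1
    · intro heq
      rw [e1, e2] at heq
      have hW0 : Z - Zs = 0 := tmul_self_eq_zero (hkey.2 heq)
      rwa [sub_eq_zero] at hW0
  refine ⟨part1, fun Z hZ => (hcompare Z hZ).1, fun Z hZ heq => (hcompare Z hZ).2 heq.symm⟩
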